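/- arXiv:1905.05723 — 3 statements merged into one kernel-verified Lean document; each statement's English description precedes it below -/
import Mathlib

section
/- In QH_α, the relation c_m^n = (α q)^m holds, where n = m + k. -/
/-- The sequence `c = (c_1, …, c_m, 0, 0, …)` of variables of `S = ℚ[c_1, …, c_m]`,
with `c_0 = 1` and `c_i = 0` for `i < 0` or `i > m`. -/
noncomputable def cVar (m : ℕ) : ℤ → MvPolynomial (Fin m) ℚ := fun i =>
  if h : 1 ≤ i ∧ i ≤ (m : ℤ) then MvPolynomial.X ⟨(i - 1).toNat, by omega⟩
  else if i = 0 then 1 else 0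

/-- `σ_p = Δ_{(1^p)}(c) = det(c_{1+j-i})_{p×p}`, extended by `σ_p = 0` for `p < 0`. -/
noncomputable def sigmaP (m : ℕ) : ℤ → MvPolynomial (Fin m) ℚ := fun p =>
  if p < 0 then 0
  else Matrix.det (Matrix.of fun i j : Fin p.toNat => cVar m (1 + (j : ℤ) - (i : ℤ)))

/-- `σ_λ = Δ_λ(σ) = det(σ_{λ_i+j-i})`. -/
noncomputable def sigmaL (m : ℕ) {l : ℕ} (lam : Fin l → ℕ) : MvPolynomial (Fin m) ℚ :=
  Matrix.det (Matrix.of fun i j : Fin l => sigmaP m ((lam i : ℤ) + (j : ℤ) - (i : ℤ)))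

open Matrix in
lemma cVar_zero (m : ℕ) : cVar m 0 = 1 := by simp [cVar]
lemma cVar_of_neg {m : ℕ} {i : ℤ} (h : i < 0) : cVar m i = 0 := by
  simp only [cVar]; rw [dif_neg (by omega), if_neg (by omega)]
lemma cVar_of_gt {m : ℕ} {i : ℤ} (h : (m:ℤ) < i) : cVar m i = 0 := by
  simp only [cVar]; rw [dif_neg (by omega), if_neg (by omega)]
lemma sigmaP_of_neg {m : ℕ} {p : ℤ} (h : p < 0) : sigmaP m p = 0 := by
  simp [sigmaP, h]
lemma sigmaP_zero (m : ℕ) : sigmaP m 0 = 1 := by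
  simp [sigmaP]
lemma sigmaP_natCast (m p : ℕ) : sigmaP m p =
    Matrix.det (Matrix.of fun i j : Fin p => cVar m (1 + (j : ℤ) - (i : ℤ))) := by
  rw [sigmaP, if_neg (by omega)]; congr 1

noncomputable def GA (m : ℕ) (s : ℤ) (r : ℕ) :
    Matrix (Fin r) (Fin r) (MvPolynomial (Fin m) ℚ) :=
  Matrix.of fun i j =>
    if (i : ℕ) = 0 then cVar m (s + (j : ℤ)) else cVar m (1 + (j : ℤ) - (i : ℤ))

noncomputable def Gmat (m : ℕ) (s : ℤ) (r : ℕ) : MvPolynomial (Fin m) ℚ := (GA m s r).det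

lemma succAbove_one_val {r : ℕ} (i : Fin (r+1)) :
    ((Fin.succAbove (1 : Fin (r+2)) i : Fin (r+2)) : ℕ) =
      if (i : ℕ) = 0 then 0 else (i : ℕ) + 1 := by
  rcases Nat.eq_zero_or_pos (i : ℕ) with h | h
  · rw [if_pos h]
    have : Fin.castSucc i < (1 : Fin (r+2)) := by
      rw [Fin.lt_def]; simp [h]
    rw [Fin.succAbove_of_castSucc_lt _ _ this]; simp [h]
  · rw [if_neg (by omega)]
    have : (1 : Fin (r+2)) ≤ Fin.castSucc i := by
      rw [Fin.le_def]; simp; omega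
    rw [Fin.succAbove_of_le_castSucc _ _ this]; simp

lemma Gmat_one (m : ℕ) (s : ℤ) : Gmat m s 1 = cVar m s := by
  rw [Gmat, Matrix.det_fin_one]; simp [GA]

lemma Gmat_rec (m : ℕ) (s : ℤ) (r : ℕ) :
    Gmat m s (r+2) = cVar m s * sigmaP m ((r:ℤ)+1) - Gmat m (s+1) (r+1) := by
  have t0 : GA m s (r+2) 0 0 = cVar m s := by simp [GA]
  have t1 : GA m s (r+2) 1 0 = 1 := by
    simp only [GA, Matrix.of_apply, Fin.val_one, Fin.val_zero]
    simp only [one_ne_zero, ↓reduceIte]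
    norm_num
    exact cVar_zero m
  have ttail : ∀ i : Fin r, GA m s (r+2) i.succ.succ 0 = 0 := by
    intro i
    simp only [GA, Matrix.of_apply]
    rw [if_neg (by simp)]
    apply cVar_of_neg
    simp only [Fin.val_succ, Fin.val_zero]
    push_cast; omega
  have e0 : ((GA m s (r+2)).submatrix (Fin.succAbove 0) Fin.succ).det
      = sigmaP m ((r:ℤ)+1) := by
    have hc : ((r:ℤ)+1) = ((r+1 : ℕ) : ℤ) := by push_cast; ring
    rw [hc, sigmaP_natCast]
    refine congrArg Matrix.det (Matrix.ext fun i j => ?_)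
    simp only [Matrix.submatrix_apply, Fin.succAbove_zero, GA, Matrix.of_apply, Fin.val_succ]
    rw [if_neg (Nat.succ_ne_zero _)]
    congr 1
    push_cast
    ring
  have e1 : ((GA m s (r+2)).submatrix (Fin.succAbove 1) Fin.succ).det
      = Gmat m (s+1) (r+1) := by
    rw [Gmat]
    refine congrArg Matrix.det (Matrix.ext fun i j => ?_)
    have hv := succAbove_one_val i
    simp only [Matrix.submatrix_apply, GA, Matrix.of_apply, Fin.val_succ]
    by_cases h : (i : ℕ) = 0
    · rw [if_pos h] at hv
      rw [if_pos hv, if_pos h]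
      have hz : ((Fin.succAbove (1 : Fin (r+2)) i : Fin (r+2)) : ℤ) = 0 := by
        exact_mod_cast hv
      congr 1
      push_cast
      ring
    · rw [if_neg h] at hv
      rw [if_neg (by omega), if_neg h]
      have hz : ((Fin.succAbove (1 : Fin (r+2)) i : Fin (r+2)) : ℤ) = (i : ℤ) + 1 := by
        exact_mod_cast hv
      rw [hz]
      congr 1
      push_cast; ring
  show (GA m s (r+2)).det = _
  rw [Matrix.det_succ_column_zero, Fin.sum_univ_succ, Fin.sum_univ_succ, Fin.succ_zero_eq_one]
  rw [t0, t1, e0, e1]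
  have hz : (∑ i : Fin r, (-1:MvPolynomial (Fin m) ℚ)^((i.succ.succ : Fin (r+2)) : ℕ) *
      GA m s (r+2) i.succ.succ 0 *
      ((GA m s (r+2)).submatrix i.succ.succ.succAbove Fin.succ).det) = 0 :=
    Finset.sum_eq_zero (fun i _ => by rw [ttail i]; ring)
  rw [hz]
  simp only [Fin.val_zero, Fin.val_one, pow_zero, pow_one]
  ring

lemma Gmat_eq (m : ℕ) : ∀ (r : ℕ) (s : ℤ), Gmat m s (r+1) =
    ∑ t ∈ Finset.range (r+1), (-1)^t * cVar m (s + t) * sigmaP m ((r:ℤ) - t) := by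
  intro r
  induction r with
  | zero =>
    intro s
    simp [Gmat_one, sigmaP_zero]
  | succ r ih =>
    intro s
    rw [Gmat_rec, ih (s+1)]
    rw [show ((r+1:ℕ):ℤ) = (r:ℤ)+1 from by push_cast; ring]
    rw [Finset.sum_range_succ' (fun t => (-1:MvPolynomial (Fin m) ℚ)^t * cVar m (s + t)
      * sigmaP m (((r:ℤ)+1) - t))]
    have h1 : ∀ t ∈ Finset.range (r+1),
        (-1:MvPolynomial (Fin m) ℚ)^(t+1) * cVar m (s + (t+1 : ℕ)) * sigmaP m (((r:ℤ)+1) - (t+1 : ℕ))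
        = -((-1)^t * cVar m ((s+1) + t) * sigmaP m ((r:ℤ) - t)) := by
      intro t _
      have e1 : s + ((t+1 : ℕ) : ℤ) = (s+1) + t := by push_cast; ring
      have e2 : ((r:ℤ)+1) - ((t+1 : ℕ) : ℤ) = (r:ℤ) - t := by push_cast; ring
      rw [e1, e2, pow_succ]
      ring
    rw [Finset.sum_congr rfl h1, Finset.sum_neg_distrib]
    simp only [Nat.cast_zero, add_zero, sub_zero, pow_zero, one_mul]
    ring

lemma sigmaP_eq_Gmat (m r : ℕ) : sigmaP m (r+1 : ℕ) = Gmat m 1 (r+1) := by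
  rw [sigmaP_natCast, Gmat]
  refine congrArg Matrix.det (Matrix.ext fun i j => ?_)
  simp only [GA, Matrix.of_apply]
  by_cases h : (i : ℕ) = 0
  · rw [if_pos h]
    congr 1
    have : (i : ℤ) = 0 := by exact_mod_cast h
    rw [this]; ring
  · rw [if_neg h]

/-- Key recurrence: `σ_p = Σ_{t<m} (-1)^t c_{1+t} σ_{p-1-t}` for `p ≥ 1`. -/
lemma sigmaP_rec (m : ℕ) {p : ℤ} (hp : 1 ≤ p) :
    sigmaP m p = ∑ t ∈ Finset.range m, (-1)^t * cVar m (1 + t) * sigmaP m (p - 1 - t) := by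
  obtain ⟨r, hr⟩ : ∃ r : ℕ, p = (r:ℤ) + 1 := ⟨(p-1).toNat, by omega⟩
  subst hr
  have h0 : ((r:ℤ) + 1) = ((r + 1 : ℕ) : ℤ) := by push_cast; ring
  rw [h0, sigmaP_eq_Gmat, Gmat_eq]
  -- both sums equal the sum over `range (max (r+1) m)`
  have hvan : ∀ t : ℕ, (r:ℕ) < t ∨ m ≤ t →
      (-1:MvPolynomial (Fin m) ℚ)^t * cVar m (1 + t) * sigmaP m ((r:ℤ) - t) = 0 := by
    intro t ht
    rcases ht with ht | ht
    · rw [sigmaP_of_neg (by omega)]; ring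
    · rw [cVar_of_gt (by push_cast; omega)]; ring
  have key : ∀ N : ℕ, r + 1 ≤ N → m ≤ N →
      ∑ t ∈ Finset.range N, (-1:MvPolynomial (Fin m) ℚ)^t * cVar m (1 + t) * sigmaP m ((r:ℤ) - t)
      = ∑ t ∈ Finset.range (r+1), (-1:MvPolynomial (Fin m) ℚ)^t * cVar m (1 + t)
          * sigmaP m ((r:ℤ) - t) := by
    intro N h1 h2
    refine (Finset.sum_subset (Finset.range_subset_range.2 h1) ?_).symm
    intro x _ hx
    exact hvan x (Or.inl (by simp at hx ⊢; omega))
  have key2 : ∑ t ∈ Finset.range m, (-1:MvPolynomial (Fin m) ℚ)^t * cVar m (1 + t)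
        * sigmaP m ((r:ℤ) - t)
      = ∑ t ∈ Finset.range (max (r+1) m), (-1:MvPolynomial (Fin m) ℚ)^t * cVar m (1 + t)
        * sigmaP m ((r:ℤ) - t) := by
    refine Finset.sum_subset (Finset.range_subset_range.2 (le_max_right _ _)) ?_
    intro x _ hx
    exact hvan x (Or.inr (by simp at hx ⊢; omega))
  have harg : ∀ t : ℕ, (1:ℤ) + t = 1 + (t:ℤ) := fun t => rfl
  calc ∑ t ∈ Finset.range (r+1), (-1:MvPolynomial (Fin m) ℚ)^t * cVar m (1 + t)
        * sigmaP m ((r:ℤ) - t)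
      = ∑ t ∈ Finset.range m, (-1:MvPolynomial (Fin m) ℚ)^t * cVar m (1 + t)
        * sigmaP m ((r:ℤ) - t) := by
        rw [key2, key (max (r+1) m) (le_max_left _ _) (le_max_right _ _)]
    _ = _ := by
        refine Finset.sum_congr rfl fun t _ => ?_
        congr 1
        push_cast
        ring

noncomputable def Dmat (m n : ℕ) : Matrix (Fin m) (Fin m) (MvPolynomial (Fin m) ℚ) :=
  Matrix.of fun i j => sigmaP m ((n:ℤ) + (j:ℤ) - (i:ℤ))

lemma detD_zero (m : ℕ) : (Dmat m 0).det = 1 := by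
  have h : (Dmat m 0).BlockTriangular id := by
    intro i j hij
    exact sigmaP_of_neg (by simp only [Fin.lt_def, id] at hij; push_cast; omega)
  rw [Matrix.det_of_upperTriangular h]
  have : ∀ i : Fin m, Dmat m 0 i i = 1 := by
    intro i
    show sigmaP m ((0:ℕ) + (i:ℤ) - (i:ℤ)) = 1
    rw [show ((0:ℕ):ℤ) + (i:ℤ) - (i:ℤ) = 0 by ring, sigmaP_zero]
  simp [this]

/-- the permutation of columns used in the induction step -/
def rotPerm (m' : ℕ) : Equiv.Perm (Fin (m'+1)) := finRotate (m'+1)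

lemma detD_succ (m' n : ℕ) :
    (Dmat (m'+1) (n+1)).det = cVar (m'+1) ((m'+1 : ℕ) : ℤ) * (Dmat (m'+1) n).det := by
  set m := m' + 1 with hm
  -- B = Dmat n with columns rotated: columns v_{n+1}, …, v_{n+m-1}, v_n
  set B : Matrix (Fin m) (Fin m) (MvPolynomial (Fin m) ℚ) :=
    (Dmat m n).submatrix id (finRotate m) with hB
  -- coefficients
  set c : Fin m → MvPolynomial (Fin m) ℚ := fun j =>
    if j = Fin.last m' then (-1)^m' * cVar m (1 + (m' : ℤ))
    else (-1)^(m'-1-(j:ℕ)) * cVar m (1 + ((m'-1-(j:ℕ) : ℕ) : ℤ)) with hc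
  have hBcol : ∀ (i j : Fin m), B i j =
      if j = Fin.last m' then sigmaP m ((n:ℤ) - (i:ℤ))
      else sigmaP m ((n:ℤ) + 1 + (j:ℤ) - (i:ℤ)) := by
    intro i j
    show Dmat m n i (finRotate m (j)) = _
    rw [show finRotate m j = j + 1 from finRotate_succ_apply j]
    show sigmaP m ((n:ℤ) + ((j+1 : Fin m):ℤ) - (i:ℤ)) = _
    have hval := Fin.val_add_one j
    by_cases h : j = Fin.last m'
    · rw [if_pos h] at hval ⊢
      have hz : ((j+1 : Fin m) : ℤ) = 0 := by exact_mod_cast hval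
      rw [hz]
      congr 1
      try ring
    · rw [if_neg h] at hval ⊢
      have hz : ((j+1 : Fin m) : ℤ) = (j:ℤ) + 1 := by exact_mod_cast hval
      rw [hz]
      congr 1
      try ring
  -- the involution matching columns with recurrence terms
  have hm1 : ∀ t : Fin m, t ≠ Fin.last m' → (t:ℕ) < m' := by
    intro t ht
    have := t.isLt
    have : (t:ℕ) ≠ m' := fun h => ht (Fin.ext h)
    omega
  let e : Equiv.Perm (Fin m) :=
    ⟨fun t => if t = Fin.last m' then Fin.last m' else ⟨m'-1-(t:ℕ), by omega⟩,
     fun t => if t = Fin.last m' then Fin.last m' else ⟨m'-1-(t:ℕ), by omega⟩,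
     by
      intro t
      by_cases h : t = Fin.last m'
      · simp [h]
      · have h1 := hm1 t h
        simp only [if_neg h]
        rw [if_neg (by intro hc; apply absurd (congrArg Fin.val hc); simp; omega)]
        exact Fin.ext (by simp; omega),
     by
      intro t
      by_cases h : t = Fin.last m'
      · simp [h]
      · have h1 := hm1 t h
        simp only [if_neg h]
        rw [if_neg (by intro hc; apply absurd (congrArg Fin.val hc); simp; omega)]
        exact Fin.ext (by simp; omega)⟩
  have hupd : Dmat m (n+1) = B.updateCol (Fin.last m') (fun k => ∑ j, c j • B k j) := by
    refine Matrix.ext fun i j => ?_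
    by_cases h : j = Fin.last m'
    · subst h
      rw [Matrix.updateCol_self]
      set p : ℤ := (n:ℤ) + 1 + (m':ℤ) - (i:ℤ) with hp
      have hterm : ∀ t : Fin m, c (e t) • B i (e t) =
          (-1)^(t:ℕ) * cVar m (1 + ((t:ℕ):ℤ)) * sigmaP m (p - 1 - (t:ℕ)) := by
        intro t
        by_cases ht : t = Fin.last m'
        · have he : e t = Fin.last m' := by simp [e, ht]
          rw [he, hBcol i _, if_pos rfl, hc]
          simp only [if_pos rfl]
          rw [smul_eq_mul]
          have hv : (t:ℕ) = m' := by rw [ht]; simp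
          rw [hv]
          have : p - 1 - (m':ℤ) = (n:ℤ) - (i:ℤ) := by rw [hp]; push_cast; ring
          rw [this]
          push_cast
          ring
        · have h1 := hm1 t ht
          have he : e t = ⟨m'-1-(t:ℕ), by omega⟩ := by simp [e, ht]
          have hne : (⟨m'-1-(t:ℕ), by omega⟩ : Fin m) ≠ Fin.last m' := by
            intro hc2
            apply absurd (congrArg Fin.val hc2)
            simp
            omega
          rw [he, hBcol i _, if_neg hne, hc]
          simp only [if_neg hne]
          rw [smul_eq_mul]
          have h2 : m' - 1 - (m' - 1 - (t:ℕ)) = (t:ℕ) := by omega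
          rw [h2]
          have h3 : (n:ℤ) + 1 + (((m'-1-(t:ℕ) : ℕ)):ℤ) - (i:ℤ) = p - 1 - (t:ℕ) := by
            rw [hp]; push_cast; omega
          rw [h3]
      calc Dmat m (n+1) i (Fin.last m')
          = sigmaP m p := by
            show sigmaP m (((n+1:ℕ):ℤ) + ((Fin.last m' : Fin m):ℤ) - (i:ℤ)) = _
            congr 1
            try rw [hp]
            try push_cast [Fin.val_last]
            try ring
        _ = ∑ t ∈ Finset.range m, (-1)^t * cVar m (1 + t) * sigmaP m (p - 1 - t) := by
            refine sigmaP_rec m ?_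
            rw [hp]
            have := i.isLt
            omega
        _ = ∑ t : Fin m, (-1)^(t:ℕ) * cVar m (1 + ((t:ℕ):ℤ)) * sigmaP m (p - 1 - (t:ℕ)) := by
            rw [Fin.sum_univ_eq_sum_range
              (fun t => (-1:MvPolynomial (Fin m) ℚ)^t * cVar m (1 + (t:ℤ)) * sigmaP m (p - 1 - t))]
        _ = ∑ t : Fin m, c (e t) • B i (e t) := by
            exact (Finset.sum_congr rfl fun t _ => (hterm t).symm)
        _ = ∑ j, c j • B i j := Equiv.sum_comp e (fun j => c j • B i j)
    · rw [Matrix.updateCol_ne h, hBcol i j, if_neg h]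
      show sigmaP m (((n+1:ℕ):ℤ) + (j:ℤ) - (i:ℤ)) = _
      congr 1
      try push_cast
      try ring
  rw [hupd, Matrix.det_updateCol_sum B (Fin.last m') c]
  rw [hc]
  simp only [if_pos rfl]
  rw [hB, Matrix.det_permute' (finRotate m) (Dmat m n)]
  rw [show finRotate m = finRotate (m'+1) from rfl, sign_finRotate]
  rw [smul_eq_mul]
  push_cast
  ring_nf
  rw [show m - 1 = m' from by omega, show ((m:ℕ):ℤ) = 1 + (m':ℤ) from by omega]
  have h1 : ((-1 : MvPolynomial (Fin m) ℚ))^m' * (-1)^m' = 1 := by rw [← mul_pow]; norm_num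
  linear_combination (cVar m (1 + (m':ℤ)) * (Dmat m n).det) * h1

lemma detD (m' : ℕ) : ∀ n : ℕ, (Dmat (m'+1) n).det = (cVar (m'+1) ((m'+1 : ℕ) : ℤ))^n := by
  intro n
  induction n with
  | zero => rw [detD_zero]; rfl
  | succ n ih => rw [detD_succ, ih, pow_succ]; ring

lemma detD' (m : ℕ) (hm : 0 < m) (n : ℕ) : (Dmat m n).det = (cVar m (m:ℤ))^n := by
  obtain ⟨m', rfl⟩ : ∃ m', m = m' + 1 := ⟨m - 1, by omega⟩
  exact detD m' n

lemma neg_pow_aux (R : Type*) [CommRing R] (m : ℕ) (y : R) : (-((-1:R)^m * y))^m = y^m := by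
  rw [show -((-1:R)^m * y) = (-1)^(m+1) * y from by rw [pow_succ]; ring]
  rw [mul_pow, ← pow_mul, Even.neg_one_pow (by
    rw [Nat.mul_comm]
    exact Nat.even_mul_succ_self m), one_mul]

/-- The deformed quantum ring `QH_α = S[q]/⟨σ_{k+1}, …, σ_{n-1}, σ_n + (-1)^m α q⟩`
is the quotient of `Polynomial (MvPolynomial (Fin m) ℚ)` by this ideal. -/
noncomputable def qhIdeal (m k : ℕ) (α : ℚ) :
    Ideal (Polynomial (MvPolynomial (Fin m) ℚ)) :=
  Ideal.span
    ((fun p : ℤ => Polynomial.C (sigmaP m p)) '' Set.Icc ((k : ℤ) + 1) ((m : ℤ) + k - 1) ∪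
      {Polynomial.C (sigmaP m ((m : ℤ) + k)) +
        (-1) ^ m * Polynomial.C (MvPolynomial.C α) * Polynomial.X})

/-- In `QH_α`, `c_m^n = (α q)^m` where `n = m + k`. -/
theorem cm_pow_n (m k : ℕ) (hm : 0 < m) (hk : 0 < k) (α : ℚ) :
    (Ideal.Quotient.mk (qhIdeal m k α) (Polynomial.C (cVar m (m : ℤ)))) ^ (m + k) =
      (Ideal.Quotient.mk (qhIdeal m k α)
          (Polynomial.C (MvPolynomial.C α) * Polynomial.X)) ^ m := by
  set I := qhIdeal m k α with hI
  set ψ : MvPolynomial (Fin m) ℚ →+* Polynomial (MvPolynomial (Fin m) ℚ) ⧸ I :=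
    (Ideal.Quotient.mk I).comp Polynomial.C with hψ
  have hdiag : ψ (sigmaP m ((m:ℤ) + k)) =
      -((-1)^m * Ideal.Quotient.mk I (Polynomial.C (MvPolynomial.C α) * Polynomial.X)) := by
    have hg : (Polynomial.C (sigmaP m ((m : ℤ) + k)) +
        (-1) ^ m * Polynomial.C (MvPolynomial.C α) * Polynomial.X) ∈ I := by
      rw [hI, qhIdeal]
      exact Ideal.subset_span (Set.mem_union_right _ rfl)
    have := (Ideal.Quotient.eq_zero_iff_mem).2 hg
    rw [map_add] at this
    have h2 : Ideal.Quotient.mk I (Polynomial.C (sigmaP m ((m:ℤ)+k))) =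
        -(Ideal.Quotient.mk I ((-1) ^ m * Polynomial.C (MvPolynomial.C α) * Polynomial.X)) := by
      linear_combination this
    rw [hψ]
    simp only [RingHom.comp_apply]
    rw [h2]
    rw [mul_assoc, _root_.map_mul, map_pow, map_neg, _root_.map_one]
  have hlow : ∀ p : ℤ, (k:ℤ)+1 ≤ p → p ≤ (m:ℤ)+k-1 → ψ (sigmaP m p) = 0 := by
    intro p h1 h2
    rw [hψ]
    simp only [RingHom.comp_apply]
    rw [Ideal.Quotient.eq_zero_iff_mem, hI, qhIdeal]
    exact Ideal.subset_span (Set.mem_union_left _ ⟨p, ⟨h1, h2⟩, rfl⟩)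
  have hn : True := trivial
  set n := m + k with hn2
  set y := Ideal.Quotient.mk I (Polynomial.C (MvPolynomial.C α) * Polynomial.X) with hy
  have hL : (Ideal.Quotient.mk I (Polynomial.C (cVar m (m:ℤ))))^n = ψ ((cVar m (m:ℤ))^n) := by
    rw [map_pow]
    rfl
  rw [hL, show (cVar m (m:ℤ))^n = (Dmat m n).det from (detD' m hm n).symm]
  rw [show ψ (Dmat m n).det = (ψ.mapMatrix (Dmat m n)).det from by convert RingHom.map_det (S := Polynomial (MvPolynomial (Fin m) ℚ) ⧸ I) ψ (Dmat m n)]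
  have htri : (ψ.mapMatrix (Dmat m n)).BlockTriangular id := by
    intro i j hij
    simp only [Fin.lt_def, id] at hij
    show ψ (Dmat m n i j) = 0
    have hiv := i.isLt
    have hjv := j.isLt
    exact hlow ((n:ℤ) + (j:ℤ) - (i:ℤ)) (by push_cast; omega) (by push_cast; omega)
  rw [Matrix.det_of_upperTriangular htri]
  have hdiagv : ∀ i : Fin m, (ψ.mapMatrix (Dmat m n)) i i = -((-1)^m * y) := by
    intro i
    show ψ (sigmaP m ((n:ℤ) + (i:ℤ) - (i:ℤ))) = _
    rw [show ((n:ℕ):ℤ) + (i:ℤ) - (i:ℤ) = (m:ℤ) + (k:ℤ) from by rw [hn2]; push_cast; ring]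
    rw [hdiag, hy]
  rw [Finset.prod_congr rfl (fun i _ => hdiagv i), Finset.prod_const, Finset.card_univ,
    Fintype.card_fin]
  rw [neg_pow_aux _ m y]
end

section
/- Let QH be an associative graded ℚ[q]-algebra with unit that is free as a ℚ[q]-module with homogeneous basis {τ_w : w ∈ W} (deg q_β > 0), and suppose all structure constants with respect to the ℚ-basis T = {q^d τ_w} are nonnegative. Suppose u₁,...,u_ℓ ∈ W are such that τ_{u_ℓ}···τ_{u_1} = c·q^d for some rational c > 0 and some monomial q^d. Then for every v ∈ W, the product τ_{u_1}·τ_v is a positive rational multiple of a single basis element q^e τ_w from T. -/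
open MvPolynomial

set_option linter.unusedSectionVars false
set_option maxHeartbeats 1000000

section auxQH

variable {ι W QH : Type} [Fintype ι] [Fintype W] [DecidableEq ι] [DecidableEq W] [Ring QH]
  [Algebra (MvPolynomial ι ℚ) QH]

/-- All coordinates (w.r.t. the ℚ-basis `q^m τ_w`) are nonnegative. -/
def NNg (τ : Module.Basis W (MvPolynomial ι ℚ) QH) (y : QH) : Prop :=
  ∀ w m, 0 ≤ MvPolynomial.coeff m (τ.repr y w)

/-- `y` is a positive multiple of a single basis element `q^e τ_w`. -/
def SGg (τ : Module.Basis W (MvPolynomial ι ℚ) QH) (y : QH) : Prop :=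
  ∃ (w : W) (e : ι →₀ ℕ) (c' : ℚ), 0 < c' ∧
    y = algebraMap (MvPolynomial ι ℚ) QH (MvPolynomial.monomial e c') * τ w

lemma repr_mul_eq (τ : Module.Basis W (MvPolynomial ι ℚ) QH) (a y : QH) (w₂ : W) :
    τ.repr (a * y) w₂ = ∑ w, τ.repr y w * τ.repr (a * τ w) w₂ := by
  have h1 : a * y = ∑ w, τ.repr y w • (a * τ w) := by
    conv_lhs => rw [← Module.Basis.sum_repr τ y]
    rw [Finset.mul_sum]
    exact Finset.sum_congr rfl fun w _ => mul_smul_comm _ _ _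
  rw [h1, map_sum, Finsupp.finset_sum_apply]
  exact Finset.sum_congr rfl fun w _ => by
    rw [map_smul, Finsupp.smul_apply, smul_eq_mul]

lemma NNg_mul (τ : Module.Basis W (MvPolynomial ι ℚ) QH)
    (hnn : ∀ (u v w : W) (d : ι →₀ ℕ), 0 ≤ MvPolynomial.coeff d (τ.repr (τ u * τ v) w))
    (u' : W) (y : QH) (hy : NNg τ y) : NNg τ (τ u' * y) := by
  intro w₂ m
  rw [repr_mul_eq, MvPolynomial.coeff_sum]
  refine Finset.sum_nonneg fun w _ => ?_
  rw [MvPolynomial.coeff_mul]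
  exact Finset.sum_nonneg fun p _ => mul_nonneg (hy w p.1) (hnn u' w w₂ p.2)

lemma smul_basis_eq (τ : Module.Basis W (MvPolynomial ι ℚ) QH) (p : MvPolynomial ι ℚ) (w : W) :
    algebraMap (MvPolynomial ι ℚ) QH p * τ w = p • τ w := (Algebra.smul_def _ _).symm

lemma repr_smul_basis (τ : Module.Basis W (MvPolynomial ι ℚ) QH) (p : MvPolynomial ι ℚ) (w w₂ : W) :
    τ.repr (p • τ w) w₂ = if w = w₂ then p else 0 := by
  rw [map_smul, Finsupp.smul_apply, Module.Basis.repr_self, Finsupp.single_apply]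
  split <;> simp

lemma step_lemma (τ : Module.Basis W (MvPolynomial ι ℚ) QH)
    (hnn : ∀ (u v w : W) (d : ι →₀ ℕ), 0 ≤ MvPolynomial.coeff d (τ.repr (τ u * τ v) w))
    (u₀ : W) (hinj : Function.Injective fun x : QH => τ u₀ * x)
    (y : QH) (hy : NNg τ y) (hs : SGg τ (τ u₀ * y)) : SGg τ y := by
  obtain ⟨w', e, cc, hcc, heq⟩ := hs
  rw [smul_basis_eq] at heq
  have hK : ∀ w₂, (∑ w, τ.repr y w * τ.repr (τ u₀ * τ w) w₂)
      = if w' = w₂ then monomial e cc else 0 := by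
    intro w₂
    rw [← repr_mul_eq, heq, repr_smul_basis]
  have hyne : y ≠ 0 := by
    intro h0
    rw [h0, mul_zero] at heq
    have h1 : τ.repr ((monomial e cc : MvPolynomial ι ℚ) • τ w') w' = monomial e cc := by
      rw [repr_smul_basis, if_pos rfl]
    rw [← heq, map_zero, Finsupp.coe_zero, Pi.zero_apply] at h1
    have h2 : cc = 0 := by
      have := congrArg (MvPolynomial.coeff e) h1
      rwa [MvPolynomial.coeff_zero, MvPolynomial.coeff_monomial, if_pos rfl, eq_comm] at this
    exact hcc.ne' h2
  have hsupp : ∀ w dd, MvPolynomial.coeff dd (τ.repr y w) ≠ 0 →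
      ∀ w₂ m, MvPolynomial.coeff m (τ.repr (τ u₀ * τ w) w₂) ≠ 0 →
      w₂ = w' ∧ dd + m = e := by
    intro w dd hdd w₂ m hm
    have hddpos : 0 < MvPolynomial.coeff dd (τ.repr y w) := (hy w dd).lt_of_ne (Ne.symm hdd)
    have hmpos : 0 < MvPolynomial.coeff m (τ.repr (τ u₀ * τ w) w₂) :=
      (hnn u₀ w w₂ m).lt_of_ne (Ne.symm hm)
    have hterm : 0 < MvPolynomial.coeff (dd + m)
        (τ.repr y w * τ.repr (τ u₀ * τ w) w₂) := by
      rw [MvPolynomial.coeff_mul]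
      refine lt_of_lt_of_le (mul_pos hddpos hmpos) ?_
      exact Finset.single_le_sum (f := fun p : (ι →₀ ℕ) × (ι →₀ ℕ) =>
          MvPolynomial.coeff p.1 (τ.repr y w) * MvPolynomial.coeff p.2 (τ.repr (τ u₀ * τ w) w₂))
        (fun p _ => mul_nonneg (hy w p.1) (hnn u₀ w w₂ p.2))
        (a := (dd, m)) (Finset.HasAntidiagonal.mem_antidiagonal.mpr rfl)
    have hsum : 0 < MvPolynomial.coeff (dd + m)
        (∑ w₁, τ.repr y w₁ * τ.repr (τ u₀ * τ w₁) w₂) := by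
      rw [MvPolynomial.coeff_sum]
      refine lt_of_lt_of_le hterm ?_
      refine Finset.single_le_sum (f := fun w₁ =>
          MvPolynomial.coeff (dd + m) (τ.repr y w₁ * τ.repr (τ u₀ * τ w₁) w₂))
        (fun w₁ _ => ?_) (Finset.mem_univ w)
      rw [MvPolynomial.coeff_mul]
      exact Finset.sum_nonneg fun p _ => mul_nonneg (hy w₁ p.1) (hnn u₀ w₁ w₂ p.2)
    rw [hK w₂] at hsum
    by_cases hww : w' = w₂
    · subst hww
      rw [if_pos rfl, MvPolynomial.coeff_monomial] at hsum
      by_cases hde : e = dd + m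
      · exact ⟨rfl, hde.symm⟩
      · rw [if_neg hde] at hsum; exact absurd hsum (lt_irrefl 0)
    · rw [if_neg hww, MvPolynomial.coeff_zero] at hsum
      exact absurd hsum (lt_irrefl 0)
  have key : ∀ w dd, MvPolynomial.coeff dd (τ.repr y w) ≠ 0 →
      ∃ (m₀ : ι →₀ ℕ) (b : ℚ), 0 < b ∧ dd + m₀ = e ∧
        τ u₀ * τ w = (monomial m₀ b : MvPolynomial ι ℚ) • τ w' := by
    intro w dd hdd
    have hzne : τ u₀ * τ w ≠ 0 := by
      intro h0
      have : τ w = (0 : QH) := hinj (by simpa using h0)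
      exact τ.ne_zero w this
    have hex : ∃ w₂, τ.repr (τ u₀ * τ w) w₂ ≠ 0 := by
      by_contra hcon
      push_neg at hcon
      exact hzne ((LinearEquiv.map_eq_zero_iff τ.repr).mp (Finsupp.ext hcon))
    obtain ⟨w₂, hw₂⟩ := hex
    obtain ⟨m₀, hm₀⟩ : ∃ m₀, MvPolynomial.coeff m₀ (τ.repr (τ u₀ * τ w) w₂) ≠ 0 := by
      by_contra hcon
      push_neg at hcon
      exact hw₂ (MvPolynomial.ext _ _ fun m => by simpa using hcon m)
    obtain ⟨hw₂', hdm⟩ := hsupp w dd hdd w₂ m₀ hm₀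
    subst hw₂'
    refine ⟨m₀, MvPolynomial.coeff m₀ (τ.repr (τ u₀ * τ w) w₂),
      (hnn u₀ w w₂ m₀).lt_of_ne (Ne.symm hm₀), hdm, ?_⟩
    apply τ.repr.injective
    apply Finsupp.ext
    intro w₃
    rw [repr_smul_basis]
    by_cases hw₃ : w₂ = w₃
    · subst hw₃
      rw [if_pos rfl]
      apply MvPolynomial.ext
      intro m'
      rw [MvPolynomial.coeff_monomial]
      by_cases hm' : m₀ = m'
      · subst hm'; rw [if_pos rfl]
      · rw [if_neg hm']
        by_contra hne0
        obtain ⟨_, hdm'⟩ := hsupp w dd hdd w₂ m' hne0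
        exact hm' (by
          have := hdm.trans hdm'.symm
          exact (add_left_cancel this))
    · rw [if_neg hw₃]
      apply MvPolynomial.ext
      intro m'
      rw [MvPolynomial.coeff_zero]
      by_contra hne0
      obtain ⟨hww, _⟩ := hsupp w dd hdd w₃ m' hne0
      exact hw₃ hww.symm
  have uniq : ∀ w₁ d₁ w₂ d₂, MvPolynomial.coeff d₁ (τ.repr y w₁) ≠ 0 →
      MvPolynomial.coeff d₂ (τ.repr y w₂) ≠ 0 → w₁ = w₂ ∧ d₁ = d₂ := by
    intro w₁ d₁ w₂ d₂ h₁ h₂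
    obtain ⟨m₁, b₁, hb₁, hdm₁, hz₁⟩ := key w₁ d₁ h₁
    obtain ⟨m₂, b₂, hb₂, hdm₂, hz₂⟩ := key w₂ d₂ h₂
    have e₁ : τ u₀ * ((monomial d₁ b₂ : MvPolynomial ι ℚ) • τ w₁)
        = (monomial e (b₂ * b₁) : MvPolynomial ι ℚ) • τ w' := by
      rw [mul_smul_comm, hz₁, smul_smul, MvPolynomial.monomial_mul, hdm₁]
    have e₂ : τ u₀ * ((monomial d₂ b₁ : MvPolynomial ι ℚ) • τ w₂)
        = (monomial e (b₁ * b₂) : MvPolynomial ι ℚ) • τ w' := by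
      rw [mul_smul_comm, hz₂, smul_smul, MvPolynomial.monomial_mul, hdm₂]
    have hEq : (monomial d₁ b₂ : MvPolynomial ι ℚ) • τ w₁
        = (monomial d₂ b₁ : MvPolynomial ι ℚ) • τ w₂ := by
      apply hinj
      show τ u₀ * _ = τ u₀ * _
      rw [e₁, e₂, mul_comm b₂ b₁]
    have h1 : (monomial d₁ b₂ : MvPolynomial ι ℚ)
        = if w₂ = w₁ then (monomial d₂ b₁ : MvPolynomial ι ℚ) else 0 := by
      have h1' := congrArg (fun z => τ.repr z w₁) hEq
      rwa [repr_smul_basis, repr_smul_basis, if_pos rfl] at h1'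
    by_cases hww : w₂ = w₁
    · subst hww
      rw [if_pos rfl] at h1
      by_cases hdd : d₂ = d₁
      · exact ⟨rfl, hdd.symm⟩
      · have := congrArg (MvPolynomial.coeff d₁) h1
        rw [MvPolynomial.coeff_monomial, if_pos rfl, MvPolynomial.coeff_monomial,
          if_neg hdd] at this
        exact absurd this hb₂.ne'
    · rw [if_neg hww] at h1
      have := congrArg (MvPolynomial.coeff d₁) h1
      rw [MvPolynomial.coeff_monomial, if_pos rfl, MvPolynomial.coeff_zero] at this
      exact absurd this hb₂.ne'
  obtain ⟨w₀, hw₀⟩ : ∃ w, τ.repr y w ≠ 0 := by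
    by_contra hcon
    push_neg at hcon
    apply hyne
    exact (LinearEquiv.map_eq_zero_iff τ.repr).mp (Finsupp.ext hcon)
  obtain ⟨d₀, hd₀⟩ : ∃ m, MvPolynomial.coeff m (τ.repr y w₀) ≠ 0 := by
    by_contra hcon
    push_neg at hcon
    exact hw₀ (MvPolynomial.ext _ _ fun m => by simpa using hcon m)
  refine ⟨w₀, d₀, MvPolynomial.coeff d₀ (τ.repr y w₀), (hy w₀ d₀).lt_of_ne (Ne.symm hd₀), ?_⟩
  rw [smul_basis_eq]
  apply τ.repr.injective
  apply Finsupp.ext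
  intro w₃
  rw [repr_smul_basis]
  by_cases hw₃ : w₀ = w₃
  · subst hw₃
    rw [if_pos rfl]
    apply MvPolynomial.ext
    intro m'
    rw [MvPolynomial.coeff_monomial]
    by_cases hm' : d₀ = m'
    · subst hm'; rw [if_pos rfl]
    · rw [if_neg hm']
      by_contra hne0
      exact hm' (uniq w₀ d₀ w₀ m' hd₀ hne0).2
  · rw [if_neg hw₃]
    apply MvPolynomial.ext
    intro m'
    rw [MvPolynomial.coeff_zero]
    by_contra hne0
    exact hw₃ (uniq w₀ d₀ w₃ m' hd₀ hne0).1

lemma inj_of_det_ne_zero (τ : Module.Basis W (MvPolynomial ι ℚ) QH) (a : QH)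
    (hdet : LinearMap.det (LinearMap.mulLeft (MvPolynomial ι ℚ) a) ≠ 0) :
    Function.Injective fun x : QH => a * x := by
  set f := LinearMap.mulLeft (MvPolynomial ι ℚ) a with hf
  have h : ∀ x, f x = 0 → x = 0 := by
    intro x hx
    by_contra hxne
    have hv : (⇑(τ.repr x) : W → MvPolynomial ι ℚ) ≠ 0 := by
      intro h0
      exact hxne ((LinearEquiv.map_eq_zero_iff τ.repr).mp (Finsupp.ext fun w =>
        congrFun h0 w))
    have hmv : (LinearMap.toMatrix τ τ f).mulVec (⇑(τ.repr x)) = 0 := by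
      rw [LinearMap.toMatrix_mulVec_repr, hx, map_zero]
      rfl
    have : (LinearMap.toMatrix τ τ f).det = 0 :=
      Matrix.exists_mulVec_eq_zero_iff.mp ⟨_, hv, hmv⟩
    rw [LinearMap.det_toMatrix] at this
    exact hdet this
  intro x y hxy
  have h2 : f (x - y) = 0 := by
    simp only [hf, map_sub, LinearMap.mulLeft_apply]
    simpa [sub_eq_zero] using hxy
  exact sub_eq_zero.mp (h _ h2)

lemma det_prod_ne_zero (L : List QH) (p : MvPolynomial ι ℚ) (hp : p ≠ 0)
    (τ : Module.Basis W (MvPolynomial ι ℚ) QH)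
    (hL : L.prod = algebraMap (MvPolynomial ι ℚ) QH p) :
    ∀ a ∈ L, LinearMap.det (LinearMap.mulLeft (MvPolynomial ι ℚ) a) ≠ 0 := by
  haveI : Module.Finite (MvPolynomial ι ℚ) QH := Module.Finite.of_basis τ
  haveI : Module.Free (MvPolynomial ι ℚ) QH := Module.Free.of_basis τ
  have hfac : ∀ (M : List QH), LinearMap.det (LinearMap.mulLeft (MvPolynomial ι ℚ) M.prod)
      = (M.map fun a => LinearMap.det (LinearMap.mulLeft (MvPolynomial ι ℚ) a)).prod := by
    intro M
    induction M with
    | nil => simp [LinearMap.mulLeft_one]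
    | cons a M ih =>
      rw [List.prod_cons, List.map_cons, List.prod_cons, ← ih, LinearMap.mulLeft_mul]
      exact LinearMap.det_comp _ _
  have hone : LinearMap.mulLeft (MvPolynomial ι ℚ) (L.prod)
      = p • (1 : Module.End (MvPolynomial ι ℚ) QH) := by
    apply LinearMap.ext
    intro x
    rw [hL, LinearMap.mulLeft_apply, LinearMap.smul_apply, Module.End.one_apply]
    exact (Algebra.smul_def p x).symm
  have hdetprod : LinearMap.det (LinearMap.mulLeft (MvPolynomial ι ℚ) L.prod) ≠ 0 := by
    rw [hone]
    have hmat : LinearMap.det (p • (1 : Module.End (MvPolynomial ι ℚ) QH))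
        = Matrix.det (LinearMap.toMatrix τ τ (p • (1 : Module.End (MvPolynomial ι ℚ) QH))) :=
      (LinearMap.det_toMatrix τ _).symm
    rw [hmat, map_smul, LinearMap.toMatrix_one, Matrix.det_smul, Matrix.det_one, mul_one]
    exact pow_ne_zero _ hp
  intro a ha
  rw [hfac] at hdetprod
  intro h0
  apply hdetprod
  apply List.prod_eq_zero
  rw [List.mem_map]
  exact ⟨a, ha, h0⟩

lemma NNg_list (τ : Module.Basis W (MvPolynomial ι ℚ) QH)
    (hnn : ∀ (u v w : W) (d : ι →₀ ℕ), 0 ≤ MvPolynomial.coeff d (τ.repr (τ u * τ v) w))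
    (M : List W) (z : QH) (hz : NNg τ z) : NNg τ ((M.map τ).prod * z) := by
  induction M with
  | nil => simpa only [List.map_nil, List.prod_nil, one_mul] using hz
  | cons a M ih =>
    rw [List.map_cons, List.prod_cons, mul_assoc]
    exact NNg_mul τ hnn a _ ih

lemma cancel_list (τ : Module.Basis W (MvPolynomial ι ℚ) QH)
    (hnn : ∀ (u v w : W) (d : ι →₀ ℕ), 0 ≤ MvPolynomial.coeff d (τ.repr (τ u * τ v) w))
    (M : List W) (hinjM : ∀ m ∈ M, Function.Injective fun x : QH => τ m * x) :
    ∀ z : QH, NNg τ z → SGg τ ((M.map τ).prod * z) → SGg τ z := by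
  induction M with
  | nil => intro z hz hs; simpa only [List.map_nil, List.prod_nil, one_mul] using hs
  | cons a M ih =>
    intro z hz hs
    have h1 : SGg τ (τ a * ((M.map τ).prod * z)) := by
      rw [← mul_assoc, ← List.prod_cons, ← List.map_cons]
      exact hs
    have h2 : NNg τ ((M.map τ).prod * z) := NNg_list τ hnn M z hz
    have h3 : SGg τ ((M.map τ).prod * z) :=
      step_lemma τ hnn a (hinjM a List.mem_cons_self) _ h2 h1
    exact ih (fun m hm => hinjM m (List.mem_cons_of_mem a hm)) z hz h3

end auxQH

/-- Lemma on non-negative quantum deformations: if `QH` is a graded associative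
unital `ℚ[q]`-algebra (with `ℚ[q] = MvPolynomial ι ℚ`, each variable of positive
degree), free as a `ℚ[q]`-module with homogeneous basis `(τ_w)_{w ∈ W}`, whose
structure constants with respect to the `ℚ`-basis `{q^d τ_w}` are non-negative,
and if some product `τ_{u_ℓ} ⋯ τ_{u_1}` equals `c q^d` with `c > 0`, then for
every `v ∈ W` the product `τ_{u_1} τ_v` is a positive rational multiple of a
single basis element `q^e τ_w`. -/
theorem basis_to_basis
    (ι W QH : Type) [Fintype ι] [Fintype W] [Ring QH]
    [Algebra ℚ QH] [Algebra (MvPolynomial ι ℚ) QH] [IsScalarTower ℚ (MvPolynomial ι ℚ) QH]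
    (𝒜 : ℕ → Submodule ℚ QH) [GradedRing 𝒜]
    (deg : ι → ℕ) (hdeg : ∀ β, 0 < deg β)
    (hq : ∀ β, algebraMap (MvPolynomial ι ℚ) QH (MvPolynomial.X β) ∈ 𝒜 (deg β))
    (τ : Module.Basis W (MvPolynomial ι ℚ) QH)
    (degτ : W → ℕ) (hτ : ∀ w, τ w ∈ 𝒜 (degτ w))
    (hnonneg : ∀ (u v w : W) (d : ι →₀ ℕ),
      0 ≤ MvPolynomial.coeff d (τ.repr (τ u * τ v) w))
    (l : ℕ) (hl : 0 < l) (u : Fin l → W) (c : ℚ) (hc : 0 < c) (d : ι →₀ ℕ)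
    (hprod : (List.ofFn fun i : Fin l => τ (u i.rev)).prod =
      algebraMap (MvPolynomial ι ℚ) QH (MvPolynomial.monomial d c)) :
    ∀ v : W, ∃ (w : W) (e : ι →₀ ℕ) (c' : ℚ), 0 < c' ∧
      τ (u ⟨0, hl⟩) * τ v =
        algebraMap (MvPolynomial ι ℚ) QH (MvPolynomial.monomial e c') * τ w := by
  classical
  intro v
  -- every factor of the product has injective left multiplication
  have hpne : (MvPolynomial.monomial d c : MvPolynomial ι ℚ) ≠ 0 :=
    fun h => hc.ne' (MvPolynomial.monomial_eq_zero.mp h)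
  have hdet := det_prod_ne_zero (List.ofFn fun i : Fin l => τ (u i.rev))
    (MvPolynomial.monomial d c) hpne τ hprod
  have hinj : ∀ i : Fin l, Function.Injective fun x : QH => τ (u i) * x := by
    intro i
    apply inj_of_det_ne_zero τ
    apply hdet
    rw [List.mem_ofFn]
    exact ⟨i.rev, by show τ (u i.rev.rev) = τ (u i); rw [Fin.rev_rev]⟩
  -- split off the rightmost factor
  obtain ⟨n, rfl⟩ : ∃ n, l = n + 1 := ⟨l - 1, by omega⟩
  have hsplit : (List.ofFn fun i : Fin (n + 1) => τ (u i.rev))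
      = (List.ofFn fun i : Fin n => τ (u i.castSucc.rev)).concat (τ (u ⟨0, hl⟩)) := by
    rw [List.ofFn_succ']
    congr 2
    rw [Fin.rev_last]
    exact congrArg u (Fin.ext rfl)
  have hkey : ((List.ofFn fun i : Fin n => u i.castSucc.rev).map τ).prod
      * (τ (u ⟨0, hl⟩) * τ v)
      = algebraMap (MvPolynomial ι ℚ) QH (MvPolynomial.monomial d c) * τ v := by
    rw [List.map_ofFn]
    show (List.ofFn fun i : Fin n => τ (u i.castSucc.rev)).prod * _ = _
    rw [← mul_assoc, ← List.prod_concat, ← hsplit, hprod]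
  have hz : NNg τ (τ (u ⟨0, hl⟩) * τ v) := fun w m => hnonneg _ _ w m
  have hres : SGg τ (τ (u ⟨0, hl⟩) * τ v) := by
    refine cancel_list τ hnonneg (List.ofFn fun i : Fin n => u i.castSucc.rev) ?_ _ hz ?_
    · intro m hm
      rw [List.mem_ofFn] at hm
      obtain ⟨i, rfl⟩ := hm
      exact hinj _
    · rw [hkey]
      exact ⟨v, d, c, hc, rfl⟩
  exact hres
end

section
/- Let λ, μ ⊆ m×k be partitions and suppose μ is obtained from λ by adding a single box. Then the Seidel orbit weight sums agree: Σ_{p=0}^{n−1} |μ↑p| = Σ_{p=0}^{n−1} |λ↑p|, where n = m+k. -/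
/-- Seidel shift of a partition contained in the `m × k` rectangle,
viewed as a weakly decreasing function `ℕ → ℕ` vanishing from index `m` on. -/
def seidelShift (m k : ℕ) (lam : ℕ → ℕ) : ℕ → ℕ :=
  if lam 0 < k then (fun i => if i < m then lam i + 1 else 0)
  else (fun i => lam (i + 1))

/-- `lam` is a partition contained in the `m × k` rectangle. -/
def IsPartIn (m k : ℕ) (lam : ℕ → ℕ) : Prop :=
  (∀ i j, i ≤ j → lam j ≤ lam i) ∧ lam 0 ≤ k ∧ ∀ i, m ≤ i → lam i = 0

namespace SeidelAux

variable {m k : ℕ}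

/-- `mu` is `lam` plus one box at row `r`, with "time to wrap" counter `s`:
`s = r + (k - 1 - lam r)`. -/
def Rel (m k s : ℕ) (lam mu : ℕ → ℕ) : Prop :=
  IsPartIn m k lam ∧ IsPartIn m k mu ∧
  ∃ r, r < m ∧ (∀ i, i ≠ r → mu i = lam i) ∧ mu r = lam r + 1 ∧ s + lam r + 1 = r + k

lemma shift_lt {lam : ℕ → ℕ} (h0 : lam 0 < k) (i : ℕ) :
    seidelShift m k lam i = if i < m then lam i + 1 else 0 := by
  rw [seidelShift, if_pos h0]

lemma shift_ge {lam : ℕ → ℕ} (h0 : ¬ lam 0 < k) (i : ℕ) :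
    seidelShift m k lam i = lam (i + 1) := by
  rw [seidelShift, if_neg h0]

lemma shift_part (hm : 0 < m) {lam : ℕ → ℕ} (h : IsPartIn m k lam) :
    IsPartIn m k (seidelShift m k lam) := by
  obtain ⟨hmono, hbd, hvan⟩ := h
  by_cases h0 : lam 0 < k
  · refine ⟨?_, ?_, ?_⟩
    · intro i j hij
      rw [shift_lt h0, shift_lt h0]
      by_cases hj : j < m
      · have hi : i < m := lt_of_le_of_lt hij hj
        rw [if_pos hi, if_pos hj]
        exact Nat.add_le_add_right (hmono i j hij) 1
      · rw [if_neg hj]; exact Nat.zero_le _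
    · rw [shift_lt h0, if_pos hm]; omega
    · intro i hi; rw [shift_lt h0, if_neg (by omega)]
  · refine ⟨fun i j hij => ?_, ?_, fun i hi => ?_⟩
    · rw [shift_ge h0, shift_ge h0]; exact hmono _ _ (by omega)
    · rw [shift_ge h0]; exact le_trans (hmono 0 1 (by omega)) hbd
    · rw [shift_ge h0]; exact hvan _ (by omega)

lemma wt_shift_lt {lam : ℕ → ℕ} (h0 : lam 0 < k) :
    ∑ i ∈ Finset.range m, seidelShift m k lam i = (∑ i ∈ Finset.range m, lam i) + m := by
  have h : ∀ i ∈ Finset.range m, seidelShift m k lam i = lam i + 1 := by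
    intro i hi
    rw [shift_lt h0, if_pos (Finset.mem_range.mp hi)]
  rw [Finset.sum_congr rfl h, Finset.sum_add_distrib, Finset.sum_const, Finset.card_range,
    smul_eq_mul, mul_one]

lemma wt_shift_ge {lam : ℕ → ℕ} (h : IsPartIn m k lam) (h0 : ¬ lam 0 < k) :
    (∑ i ∈ Finset.range m, seidelShift m k lam i) + lam 0 = ∑ i ∈ Finset.range m, lam i := by
  have h' : ∀ i ∈ Finset.range m, seidelShift m k lam i = lam (i + 1) := by
    intro i _; rw [shift_ge h0]
  rw [Finset.sum_congr rfl h']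
  have h1 : ∑ i ∈ Finset.range (m + 1), lam i = (∑ i ∈ Finset.range m, lam (i + 1)) + lam 0 :=
    Finset.sum_range_succ' lam m
  have h2 : ∑ i ∈ Finset.range (m + 1), lam i = (∑ i ∈ Finset.range m, lam i) + lam m :=
    Finset.sum_range_succ lam m
  have h3 : lam m = 0 := h.2.2 m le_rfl
  omega

lemma Rel_wt {s : ℕ} {lam mu : ℕ → ℕ} (h : Rel m k s lam mu) :
    ∑ i ∈ Finset.range m, mu i = (∑ i ∈ Finset.range m, lam i) + 1 := by
  obtain ⟨_, _, r, hr, heq, hval, _⟩ := h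
  have h' : ∀ i ∈ Finset.range m, mu i = lam i + (if i = r then 1 else 0) := by
    intro i _
    by_cases hi : i = r
    · subst hi; rw [if_pos rfl, hval]
    · rw [if_neg hi, heq i hi, Nat.add_zero]
  rw [Finset.sum_congr rfl h', Finset.sum_add_distrib,
    Finset.sum_ite_eq' (Finset.range m) r (fun _ => 1), if_pos (Finset.mem_range.mpr hr)]

lemma Rel_shift (hm : 0 < m) {s : ℕ} {lam mu : ℕ → ℕ} (h : Rel m k (s + 1) lam mu) :
    Rel m k s (seidelShift m k lam) (seidelShift m k mu) := by
  obtain ⟨hl, hmu, r, hr, heq, hval, hs⟩ := h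
  refine ⟨shift_part hm hl, shift_part hm hmu, ?_⟩
  by_cases h0 : lam 0 < k
  · have hmu0 : mu 0 < k := by
      by_cases h0r : r = 0
      · subst h0r; omega
      · rw [heq 0 (fun h => h0r h.symm)]; exact h0
    refine ⟨r, hr, ?_, ?_, ?_⟩
    · intro i hi
      rw [shift_lt h0, shift_lt hmu0]
      by_cases him : i < m
      · rw [if_pos him, if_pos him, heq i hi]
      · rw [if_neg him, if_neg him]
    · rw [shift_lt h0 r, shift_lt hmu0 r, if_pos hr, if_pos hr, hval]
    · rw [shift_lt h0 r, if_pos hr]; omega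
  · have hk' : k ≤ lam 0 := Nat.not_lt.mp h0
    have hr0 : r ≠ 0 := by
      intro hr0; subst hr0
      have h1 : mu 0 ≤ k := hmu.2.1
      omega
    have hmu0 : ¬ mu 0 < k := by rw [heq 0 (Ne.symm hr0)]; exact h0
    refine ⟨r - 1, by omega, ?_, ?_, ?_⟩
    · intro i hi
      rw [shift_ge h0, shift_ge hmu0]
      exact heq (i + 1) (by omega)
    · rw [shift_ge h0, shift_ge hmu0]
      have hrr : r - 1 + 1 = r := by omega
      rw [hrr, hval]
    · rw [shift_ge h0]
      have hrr : r - 1 + 1 = r := by omega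
      rw [hrr]; omega

lemma Rel_event (hm : 0 < m) (hk : 0 < k) {lam mu : ℕ → ℕ} (h : Rel m k 0 lam mu) :
    ((∑ i ∈ Finset.range m, seidelShift m k lam i) + 1
      = (∑ i ∈ Finset.range m, seidelShift m k mu i) + (m + k)) ∧
    Rel m k (m + k - 2)
      (seidelShift m k (seidelShift m k lam)) (seidelShift m k (seidelShift m k mu)) := by
  obtain ⟨hl, hmu, r, hr, heq, hval, hs⟩ := h
  have hmur0 : mu r ≤ mu 0 := hmu.1 0 r (Nat.zero_le r)
  have hmu0k : mu 0 ≤ k := hmu.2.1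
  have hr0 : r = 0 := by omega
  subst hr0
  have hlk : lam 0 + 1 = k := by omega
  have h0 : lam 0 < k := by omega
  have hmu0 : ¬ mu 0 < k := by omega
  have e1 : ∑ i ∈ Finset.range m, seidelShift m k lam i
      = (∑ i ∈ Finset.range m, lam i) + m := wt_shift_lt h0
  have e2 : (∑ i ∈ Finset.range m, seidelShift m k mu i) + mu 0
      = ∑ i ∈ Finset.range m, mu i := wt_shift_ge hmu hmu0
  have e3 : ∑ i ∈ Finset.range m, mu i = (∑ i ∈ Finset.range m, lam i) + 1 :=
    Rel_wt ⟨hl, hmu, 0, hm, heq, hval, hs⟩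
  constructor
  · omega
  · -- second shift
    have hsl0 : ¬ seidelShift m k lam 0 < k := by
      rw [shift_lt h0, if_pos hm]; omega
    have hsm0 : seidelShift m k mu 0 < k := by
      rw [shift_ge hmu0]
      calc mu 1 = lam 1 := heq 1 (by omega)
        _ ≤ lam 0 := hl.1 0 1 (by omega)
        _ < k := h0
    refine ⟨shift_part hm (shift_part hm hl), shift_part hm (shift_part hm hmu),
      m - 1, by omega, ?_, ?_, ?_⟩
    · intro i hi
      rw [shift_ge hsl0, shift_lt hsm0, shift_lt h0, shift_ge hmu0]
      by_cases him : i < m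
      · have him1 : i + 1 < m := by omega
        rw [if_pos him, if_pos him1, heq (i + 1) (by omega)]
      · rw [if_neg him, if_neg (by omega)]
    · rw [shift_ge hsl0, shift_lt hsm0, shift_lt h0, shift_ge hmu0]
      have h1 : m - 1 < m := by omega
      have h2 : ¬ m - 1 + 1 < m := by omega
      rw [if_pos h1, if_neg h2]
      have h3 : mu (m - 1 + 1) = 0 := hmu.2.2 _ (by omega)
      omega
    · rw [shift_ge hsl0, shift_lt h0]
      have h2 : ¬ m - 1 + 1 < m := by omega
      rw [if_neg h2]; omega

lemma Rel_iter (hm : 0 < m) :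
    ∀ p {s : ℕ} {lam mu : ℕ → ℕ}, Rel m k (p + s) lam mu →
      Rel m k s ((seidelShift m k)^[p] lam) ((seidelShift m k)^[p] mu) := by
  intro p
  induction p with
  | zero => intro s lam mu h; simpa using h
  | succ p ih =>
    intro s lam mu h
    rw [Function.iterate_succ_apply', Function.iterate_succ_apply']
    exact Rel_shift hm (ih (s := s + 1) (by rwa [show p + (s + 1) = p + 1 + s by omega]))

end SeidelAux

/-- If `μ ⊆ m × k` is obtained from `λ ⊆ m × k` by adding a single box, then
the Seidel orbit weight sums of `λ` and `μ` agree. -/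
theorem seidel_orbit_sum_add_box (m k : ℕ) (hm : 0 < m) (hk : 0 < k)
    (lam mu : ℕ → ℕ) (hlam : IsPartIn m k lam) (hmu : IsPartIn m k mu)
    (hsub : ∀ i, lam i ≤ mu i)
    (hbox : ∑ i ∈ Finset.range m, mu i = (∑ i ∈ Finset.range m, lam i) + 1) :
    ∑ p ∈ Finset.range (m + k), ∑ i ∈ Finset.range m, (seidelShift m k)^[p] mu i
      = ∑ p ∈ Finset.range (m + k), ∑ i ∈ Finset.range m, (seidelShift m k)^[p] lam i := by
  classical
  -- locate the added box
  have hd : ∀ i, mu i = lam i + (mu i - lam i) := fun i => by have := hsub i; omega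
  have hdsum : ∑ i ∈ Finset.range m, (mu i - lam i) = 1 := by
    have : ∑ i ∈ Finset.range m, mu i
        = (∑ i ∈ Finset.range m, lam i) + ∑ i ∈ Finset.range m, (mu i - lam i) := by
      rw [← Finset.sum_add_distrib]
      exact Finset.sum_congr rfl fun i _ => hd i
    omega
  obtain ⟨r, hrmem, hrne⟩ : ∃ r ∈ Finset.range m, mu r - lam r ≠ 0 :=
    Finset.exists_ne_zero_of_sum_ne_zero (by rw [hdsum]; omega)
  have hrm : r < m := Finset.mem_range.mp hrmem
  have hsplit : (mu r - lam r) + ∑ i ∈ (Finset.range m).erase r, (mu i - lam i) = 1 := by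
    rw [← hdsum]; exact Finset.add_sum_erase _ (fun i => mu i - lam i) hrmem
  have hrval : mu r = lam r + 1 := by have := hsub r; omega
  have hrest : ∀ i ∈ (Finset.range m).erase r, mu i - lam i = 0 := by
    intro i hi
    have h1 : ∑ i ∈ (Finset.range m).erase r, (mu i - lam i) = 0 := by omega
    exact (Finset.sum_eq_zero_iff.mp h1) i hi
  have heq : ∀ i, i ≠ r → mu i = lam i := by
    intro i hi
    by_cases him : i < m
    · have := hrest i (Finset.mem_erase.mpr ⟨hi, Finset.mem_range.mpr him⟩)
      have := hsub i; omega
    · rw [hlam.2.2 i (by omega), hmu.2.2 i (by omega)]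
  have hmurk : mu r ≤ k := le_trans (hmu.1 0 r (Nat.zero_le r)) hmu.2.1
  set s₀ := r + k - (lam r + 1) with hs₀
  have hrel : SeidelAux.Rel m k s₀ lam mu :=
    ⟨hlam, hmu, r, hrm, heq, hrval, by omega⟩
  have hs2 : s₀ + 2 ≤ m + k := by omega
  -- the event
  have hrel0 : SeidelAux.Rel m k 0 ((seidelShift m k)^[s₀] lam) ((seidelShift m k)^[s₀] mu) :=
    SeidelAux.Rel_iter hm s₀ (by rwa [Nat.add_zero])
  have event := SeidelAux.Rel_event hm hk hrel0
  set n := m + k with hn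
  have key : ∀ p ∈ Finset.range n,
      (∑ i ∈ Finset.range m, (seidelShift m k)^[p] mu i) + (if p = s₀ + 1 then m + k - 1 else 0)
        = (∑ i ∈ Finset.range m, (seidelShift m k)^[p] lam i) + (if p = s₀ + 1 then 0 else 1) := by
    intro p hp
    have hpn : p < n := Finset.mem_range.mp hp
    rcases lt_trichotomy p (s₀ + 1) with h | h | h
    · have hps : p + (s₀ - p) = s₀ := by omega
      have hr' := SeidelAux.Rel_iter hm p (s := s₀ - p) (by rwa [hps])
      have := SeidelAux.Rel_wt hr'
      rw [if_neg (by omega), if_neg (by omega)]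
      omega
    · subst h
      rw [if_pos rfl, if_pos rfl]
      have e1 := event.1
      rw [← Function.iterate_succ_apply' (seidelShift m k) s₀ lam,
        ← Function.iterate_succ_apply' (seidelShift m k) s₀ mu] at e1
      simp only [Nat.succ_eq_add_one] at e1
      omega
    · have hbase := event.2
      have hq1 : seidelShift m k (seidelShift m k ((seidelShift m k)^[s₀] lam))
          = (seidelShift m k)^[s₀ + 2] lam := by
        rw [show s₀ + 2 = s₀ + 1 + 1 by omega, Function.iterate_succ_apply',
          Function.iterate_succ_apply']
      have hq2 : seidelShift m k (seidelShift m k ((seidelShift m k)^[s₀] mu))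
          = (seidelShift m k)^[s₀ + 2] mu := by
        rw [show s₀ + 2 = s₀ + 1 + 1 by omega, Function.iterate_succ_apply',
          Function.iterate_succ_apply']
      rw [hq1, hq2] at hbase
      set q := p - (s₀ + 2) with hqdef
      have hqs : q + (n - 2 - q) = n - 2 := by omega
      have hr' := SeidelAux.Rel_iter hm q (s := n - 2 - q) (by rwa [hqs])
      rw [← Function.iterate_add_apply, ← Function.iterate_add_apply,
        show q + (s₀ + 2) = p by omega] at hr'
      have := SeidelAux.Rel_wt hr'
      rw [if_neg (by omega), if_neg (by omega)]
      omega
  have hsum := Finset.sum_congr rfl key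
  rw [Finset.sum_add_distrib, Finset.sum_add_distrib] at hsum
  have h1 : ∑ p ∈ Finset.range n, (if p = s₀ + 1 then m + k - 1 else 0) = m + k - 1 := by
    rw [Finset.sum_ite_eq' (Finset.range n) (s₀ + 1) (fun _ => m + k - 1),
      if_pos (Finset.mem_range.mpr (by omega))]
  have h2 : ∑ p ∈ Finset.range n, (if p = s₀ + 1 then 0 else 1) = n - 1 := by
    have ha : ∀ p ∈ Finset.range n,
        (if p = s₀ + 1 then (0 : ℕ) else 1) + (if p = s₀ + 1 then 1 else 0) = 1 := by
      intro p _; by_cases h : p = s₀ + 1 <;> simp [h]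
    have hb : ∑ p ∈ Finset.range n,
        ((if p = s₀ + 1 then (0 : ℕ) else 1) + (if p = s₀ + 1 then 1 else 0)) = n := by
      rw [Finset.sum_congr rfl ha, Finset.sum_const, Finset.card_range, smul_eq_mul, mul_one]
    rw [Finset.sum_add_distrib] at hb
    have hcmem : ∑ p ∈ Finset.range n, (if p = s₀ + 1 then (1 : ℕ) else 0) = 1 := by
      rw [Finset.sum_ite_eq' (Finset.range n) (s₀ + 1) (fun _ => 1),
        if_pos (Finset.mem_range.mpr (by omega))]
    omega
  rw [h1, h2] at hsum
  omega
end
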